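/- Let A ∈ ℝ^{n×n}, B ∈ ℝ^{n×m}, C ∈ ℝ^{p×n}, E ∈ ℝ^{n×r} with rank(E) = r, and let U_p ∈ ℝ^{m×N}, D_p ∈ ℝ^{r×N}, X_p, X_f ∈ ℝ^{n×N}, Y_p, Y_f ∈ ℝ^{p×N} satisfy X_f = A·X_p + B·U_p + E·D_p, Y_p = C·X_p and Y_f = C·X_f, with the stacked (m+r+n)×N matrix [U_p; D_p; X_p] of full row rank m+r+n. Suppose there exist matrices T₁ ∈ ℝ^{n×m}, T₂ ∈ ℝ^{n×p}, T₃ ∈ ℝ^{n×n}, T₄ ∈ ℝ^{n×p} with T₃ nilpotent and C·T₁ of full column rank m, such that X_f = T₁·U_p + T₂·Y_p + T₃·X_p + T₄·Y_f. Then for every nonzero z ∈ ℂ the complex (n+p)×(n+r) block matrix [[z·I_n − A, −E],[C, 0]] has rank n + r, and [C·B C·E] has rank m + r. -/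

import Mathlib

open Matrix

lemma aux_rank_card {K : Type*} [Field K] {a b : Type*} [Fintype a] [Fintype b]
    (M : Matrix a b K) : M.rank = Fintype.card b ↔ Function.Injective M.mulVecLin := by
  have h := LinearMap.finrank_range_add_finrank_ker M.mulVecLin
  rw [Module.finrank_pi] at h
  rw [← LinearMap.ker_eq_bot, Matrix.rank]
  constructor
  · intro hr
    rw [hr] at h
    have h0 : Module.finrank K (LinearMap.ker M.mulVecLin) = 0 := by omega
    exact Submodule.finrank_eq_zero.mp h0
  · intro hk
    rw [hk, finrank_bot, add_zero] at h
    exact h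

lemma aux_mulVec_inj {K : Type*} [Field K] {a b : Type*} [Fintype a] [Fintype b]
    (M : Matrix a b K) (h : M.rank = Fintype.card b) {v : b → K} (hv : M *ᵥ v = 0) : v = 0 := by
  have hinj := (aux_rank_card M).mp h
  have h2 : M.mulVecLin v = M.mulVecLin 0 := by
    simp [Matrix.mulVecLin_apply, hv]
  exact hinj h2

lemma aux_left_inv {K : Type*} [Field K] {a b : Type*} [Fintype a] [Fintype b]
    [DecidableEq a] [DecidableEq b] (M : Matrix a b K) (h : M.rank = Fintype.card b) :
    ∃ L : Matrix b a K, L * M = 1 := by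
  have hinj := (aux_rank_card M).mp h
  obtain ⟨g, hg⟩ := M.mulVecLin.exists_leftInverse_of_injective (LinearMap.ker_eq_bot.mpr hinj)
  refine ⟨LinearMap.toMatrix' g, ?_⟩
  have h2 : LinearMap.toMatrix' g * LinearMap.toMatrix' M.mulVecLin
      = LinearMap.toMatrix' (g ∘ₗ M.mulVecLin) := (LinearMap.toMatrix'_comp g M.mulVecLin).symm
  rw [show M.mulVecLin = Matrix.toLin' M from rfl, LinearMap.toMatrix'_toLin'] at h2
  rw [h2, show Matrix.toLin' M = M.mulVecLin from rfl, hg, LinearMap.toMatrix'_id]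

lemma aux_row_rank {K : Type*} [Field K] {a b q : Type*} [Fintype a] [Fintype b]
    (S : Matrix a b K) (h : S.rank = Fintype.card a)
    (M : Matrix q a K) (hM : M * S = 0) : M = 0 := by
  have ht : Sᵀ.rank = Fintype.card a := by rw [Matrix.rank_transpose]; exact h
  funext i j
  have hrow : Sᵀ *ᵥ (M i) = 0 := by
    funext k
    have h3 := congrFun (congrFun hM i) k
    simpa [Matrix.mulVec, Matrix.mul_apply, dotProduct, Matrix.transpose_apply,
      mul_comm] using h3
  have h4 := aux_mulVec_inj Sᵀ ht hrow
  exact congrFun h4 j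

/-- Existence of a solution (T₁, T₂, T₃, T₄) of the data equation with T₃ nilpotent
and C·T₁ of full column rank implies the model-based solvability conditions. -/
theorem stmt_11 {n m p r N : ℕ}
    (A : Matrix (Fin n) (Fin n) ℝ) (B : Matrix (Fin n) (Fin m) ℝ)
    (C : Matrix (Fin p) (Fin n) ℝ) (E : Matrix (Fin n) (Fin r) ℝ)
    (hE : E.rank = r)
    (U_p : Matrix (Fin m) (Fin N) ℝ) (D_p : Matrix (Fin r) (Fin N) ℝ)
    (X_p X_f : Matrix (Fin n) (Fin N) ℝ) (Y_p Y_f : Matrix (Fin p) (Fin N) ℝ)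
    (hdata : X_f = A * X_p + B * U_p + E * D_p)
    (hYp : Y_p = C * X_p) (hYf : Y_f = C * X_f)
    (hFRR : (Matrix.fromRows U_p (Matrix.fromRows D_p X_p)).rank = m + r + n)
    (T₁ : Matrix (Fin n) (Fin m) ℝ) (T₂ : Matrix (Fin n) (Fin p) ℝ)
    (T₃ : Matrix (Fin n) (Fin n) ℝ) (T₄ : Matrix (Fin n) (Fin p) ℝ)
    (hT₃ : IsNilpotent T₃) (hCT₁ : (C * T₁).rank = m)
    (hsol : X_f = T₁ * U_p + T₂ * Y_p + T₃ * X_p + T₄ * Y_f) :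
    (∀ z : ℂ, z ≠ 0 →
        (Matrix.fromBlocks
            (z • (1 : Matrix (Fin n) (Fin n) ℂ) - A.map (algebraMap ℝ ℂ))
            (-(E.map (algebraMap ℝ ℂ)))
            (C.map (algebraMap ℝ ℂ)) 0).rank = n + r) ∧
      (Matrix.fromCols (C * B) (C * E)).rank = m + r := by
  have hScard : (Matrix.fromRows U_p (Matrix.fromRows D_p X_p)).rank
      = Fintype.card (Fin m ⊕ (Fin r ⊕ Fin n)) := by
    rw [hFRR]; simp [add_assoc]
  -- the data consistency equation
  have h : A * X_p + B * U_p + E * D_p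
      = T₁ * U_p + T₂ * (C * X_p) + T₃ * X_p
        + T₄ * (C * (A * X_p + B * U_p + E * D_p)) := by
    rw [hYp, hYf, hdata] at hsol; exact hsol
  simp only [Matrix.mul_add] at h
  have hM0 : Matrix.fromCols (B - T₁ - T₄ * (C * B))
      (Matrix.fromCols (E - T₄ * (C * E)) (A - T₂ * C - T₃ - T₄ * (C * A)))
      * Matrix.fromRows U_p (Matrix.fromRows D_p X_p) = 0 := by
    rw [Matrix.fromCols_mul_fromRows, Matrix.fromCols_mul_fromRows]
    rw [← sub_eq_zero] at h
    rw [← h]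
    simp only [Matrix.sub_mul, Matrix.mul_assoc]
    abel
  have hZ := aux_row_rank _ hScard _ hM0
  have e1 : B - T₁ - T₄ * (C * B) = 0 := by
    funext i j
    simpa using congrFun (congrFun hZ i) (Sum.inl j)
  have e2 : E - T₄ * (C * E) = 0 := by
    funext i j
    simpa using congrFun (congrFun hZ i) (Sum.inr (Sum.inl j))
  have e3 : A - T₂ * C - T₃ - T₄ * (C * A) = 0 := by
    funext i j
    simpa using congrFun (congrFun hZ i) (Sum.inr (Sum.inr j))
  have hT1 : T₁ = B - T₄ * (C * B) := by
    have h5 : B - T₄ * (C * B) - T₁ = 0 := by rw [← e1]; abel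
    exact (sub_eq_zero.mp h5).symm
  have hE2 : E = T₄ * (C * E) := sub_eq_zero.mp e2
  have hT3 : T₃ = A - T₂ * C - T₄ * (C * A) := by
    have h5 : A - T₂ * C - T₄ * (C * A) - T₃ = 0 := by rw [← e3]; abel
    exact (sub_eq_zero.mp h5).symm
  have hErank : E.rank = Fintype.card (Fin r) := by rw [hE]; simp
  constructor
  · -- complex part
    intro z hz
    set f := algebraMap ℝ ℂ with hf
    have hcard : Fintype.card (Fin n ⊕ Fin r) = n + r := by simp
    rw [← hcard, aux_rank_card, ← LinearMap.ker_eq_bot, LinearMap.ker_eq_bot']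
    intro v hv
    rw [Matrix.mulVecLin_apply, Matrix.fromBlocks_mulVec] at hv
    set x := v ∘ Sum.inl with hx
    set d := v ∘ Sum.inr with hd
    have h1 : (z • (1 : Matrix (Fin n) (Fin n) ℂ) - A.map f) *ᵥ x
        + (-(E.map f)) *ᵥ d = 0 := by
      funext i; exact congrFun hv (Sum.inl i)
    have h2 : (C.map f) *ᵥ x = 0 := by
      have h6 : (C.map f) *ᵥ x + (0 : Matrix (Fin p) (Fin r) ℂ) *ᵥ d = 0 := by
        funext i; exact congrFun hv (Sum.inr i)
      simpa [Matrix.zero_mulVec] using h6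
    have hA : (A.map f) *ᵥ x = z • x - (E.map f) *ᵥ d := by
      have h1' : z • x - (E.map f) *ᵥ d - (A.map f) *ᵥ x = 0 := by
        rw [← h1, Matrix.sub_mulVec, Matrix.neg_mulVec, Matrix.smul_mulVec,
          Matrix.one_mulVec]
        abel
      exact (sub_eq_zero.mp h1').symm
    have hE2c : E.map f = T₄.map f * (C.map f * E.map f) := by
      have h7 := congrArg (fun (M : Matrix (Fin n) (Fin r) ℝ) => M.map f) hE2
      simpa only [Matrix.map_mul] using h7
    have hT3c : T₃.map f = A.map f - T₂.map f * C.map f - T₄.map f * (C.map f * A.map f) := by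
      have h7 := congrArg (fun (M : Matrix (Fin n) (Fin n) ℝ) => M.map f) hT3
      simpa only [Matrix.map_mul, Matrix.map_sub _ (map_sub f)] using h7
    have hT3x : (T₃.map f) *ᵥ x = z • x := by
      rw [hT3c, Matrix.sub_mulVec, Matrix.sub_mulVec,
        ← Matrix.mulVec_mulVec (v := x) (M := T₂.map ⇑f) (N := C.map ⇑f), h2,
        Matrix.mulVec_zero,
        ← Matrix.mulVec_mulVec (v := x) (M := T₄.map ⇑f) (N := C.map ⇑f * A.map ⇑f),
        ← Matrix.mulVec_mulVec (v := x) (M := C.map ⇑f) (N := A.map ⇑f), hA,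
        Matrix.mulVec_sub, Matrix.mulVec_smul, h2, smul_zero, zero_sub,
        Matrix.mulVec_neg, Matrix.mulVec_mulVec, Matrix.mulVec_mulVec, Matrix.mul_assoc, ← hE2c]
      abel
    obtain ⟨k, hk⟩ := hT₃
    have hkc : (T₃.map ⇑f) ^ k = 0 := by
      have h7 : T₃.map ⇑f
          = (f.mapMatrix : Matrix (Fin n) (Fin n) ℝ →+* Matrix (Fin n) (Fin n) ℂ) T₃ := rfl
      rw [h7, ← map_pow, hk, map_zero]
    have hpow : ∀ j : ℕ, (T₃.map ⇑f) ^ j *ᵥ x = z ^ j • x := by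
      intro j
      induction j with
      | zero => simp [Matrix.one_mulVec]
      | succ i ih =>
        rw [pow_succ, ← Matrix.mulVec_mulVec, hT3x, Matrix.mulVec_smul, ih, smul_smul,
          ← pow_succ']
    have hx0 : x = 0 := by
      have h8 := (hpow k).symm
      rw [hkc, Matrix.zero_mulVec] at h8
      rcases smul_eq_zero.mp h8 with h10 | h10
      · exact absurd h10 (pow_ne_zero k hz)
      · exact h10
    have hEd : (E.map ⇑f) *ᵥ d = 0 := by
      have h9 := h1
      rw [hx0, Matrix.mulVec_zero, zero_add, Matrix.neg_mulVec] at h9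
      exact neg_eq_zero.mp h9
    obtain ⟨L, hL⟩ := aux_left_inv E hErank
    have hLc : (L.map ⇑f) * (E.map ⇑f) = 1 := by
      have h7 := congrArg (fun (M : Matrix (Fin r) (Fin r) ℝ) => M.map ⇑f) hL
      simpa only [Matrix.map_mul, Matrix.map_one ⇑f (map_zero f) (map_one f)] using h7
    have hd0 : d = 0 := by
      have h9 : d = (L.map ⇑f * E.map ⇑f) *ᵥ d := by rw [hLc, Matrix.one_mulVec]
      rw [← Matrix.mulVec_mulVec, hEd, Matrix.mulVec_zero] at h9
      exact h9
    funext i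
    cases i with
    | inl j => exact congrFun hx0 j
    | inr j => exact congrFun hd0 j
  · -- real part
    have hcard : Fintype.card (Fin m ⊕ Fin r) = m + r := by simp
    rw [← hcard, aux_rank_card, ← LinearMap.ker_eq_bot, LinearMap.ker_eq_bot']
    intro v hv
    rw [Matrix.mulVecLin_apply] at hv
    set u := v ∘ Sum.inl with hu
    set w := v ∘ Sum.inr with hw
    have hveq : Sum.elim u w = v := by funext i; cases i <;> rfl
    have hv' : (C * B) *ᵥ u + (C * E) *ᵥ w = 0 := by
      rw [← Matrix.fromCols_mulVec_sumElim, hveq]; exact hv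
    have hCBu : (C * B) *ᵥ u = -((C * E) *ᵥ w) := by
      rw [add_eq_zero_iff_eq_neg] at hv'; exact hv'
    have hstep : (C * (T₄ * (C * B))) *ᵥ u = -((C * E) *ᵥ w) := by
      have h9 : (C * (T₄ * (C * B))) *ᵥ u = (C * T₄) *ᵥ ((C * B) *ᵥ u) := by
        rw [Matrix.mulVec_mulVec, Matrix.mul_assoc]
      rw [h9, hCBu, Matrix.mulVec_neg, Matrix.mulVec_mulVec, Matrix.mul_assoc, ← hE2]
    have hCT1u : (C * T₁) *ᵥ u = 0 := by
      rw [hT1, Matrix.mul_sub, Matrix.sub_mulVec, hstep, hCBu]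
      abel
    have hu0 : u = 0 := aux_mulVec_inj (C * T₁) (by rw [hCT₁]; simp) hCT1u
    have hw1 : (C * E) *ᵥ w = 0 := by
      rw [hu0, Matrix.mulVec_zero, zero_add] at hv'; exact hv'
    have hEw : E *ᵥ w = 0 := by
      rw [hE2, ← Matrix.mulVec_mulVec, hw1, Matrix.mulVec_zero]
    have hw0 : w = 0 := aux_mulVec_inj E hErank hEw
    funext i
    cases i with
    | inl j => exact congrFun hu0 j
    | inr j => exact congrFun hw0 j
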